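/- Let p and q be nonconstant polynomials with complex coefficients. Then for every w ∈ ℂ there exists t ∈ ℂ with t ≠ 0 such that p(t) + q(1/t) = w. -/

import Mathlib

/-- For nonconstant complex polynomials p, q and any w ∈ ℂ there is t ≠ 0 with
p(t) + q(1/t) = w. -/
theorem exists_nonzero_eval_add_eval_inv_eq (p q : Polynomial ℂ)
    (hp : 1 ≤ p.natDegree) (hq : 1 ≤ q.natDegree) (w : ℂ) :
    ∃ t : ℂ, t ≠ 0 ∧ p.eval t + q.eval (1 / t) = w := by
  classical
  have hq0 : q ≠ 0 := fun h => by simp [h] at hq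
  set m := q.natDegree with hm
  have hp0 : p - Polynomial.C w ≠ 0 := by
    intro h
    have hpc : p = Polynomial.C w := sub_eq_zero.mp h
    rw [hpc, Polynomial.natDegree_C] at hp
    omega
  set f : Polynomial ℂ := (p - Polynomial.C w) * Polynomial.X ^ m + q.reverse with hf
  have hdeg1 : ((p - Polynomial.C w) * Polynomial.X ^ m).natDegree
      = (p - Polynomial.C w).natDegree + m := by
    rw [Polynomial.natDegree_mul hp0 (pow_ne_zero _ Polynomial.X_ne_zero), Polynomial.natDegree_X_pow]
  have hpn : 1 ≤ (p - Polynomial.C w).natDegree := by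
    rwa [Polynomial.natDegree_sub_C]
  have hrev : q.reverse.natDegree < ((p - Polynomial.C w) * Polynomial.X ^ m).natDegree := by
    rw [hdeg1]
    calc q.reverse.natDegree ≤ m := q.reverse_natDegree_le
      _ < (p - Polynomial.C w).natDegree + m := by omega
  have hfdeg : f.natDegree = (p - Polynomial.C w).natDegree + m := by
    rw [hf, Polynomial.natDegree_add_eq_left_of_natDegree_lt hrev, hdeg1]
  have hf0 : f ≠ 0 := by
    intro h
    have := hfdeg
    rw [h, Polynomial.natDegree_zero] at this
    omega
  have hfd : 0 < f.degree := by
    rw [Polynomial.degree_eq_natDegree hf0]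
    exact_mod_cast by omega
  obtain ⟨z, hz⟩ := Complex.exists_root hfd
  have hzroot : f.eval z = 0 := hz
  have hz0 : z ≠ 0 := by
    intro h
    rw [h] at hzroot
    have hm1 : 1 ≤ m := hq
    rw [hf] at hzroot
    simp only [Polynomial.eval_add, Polynomial.eval_mul, Polynomial.eval_pow,
      Polynomial.eval_X, zero_pow (by omega : m ≠ 0), mul_zero, zero_add] at hzroot
    rw [← Polynomial.coeff_zero_eq_eval_zero, Polynomial.coeff_zero_reverse] at hzroot
    exact hq0 (Polynomial.leadingCoeff_eq_zero.mp hzroot)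
  refine ⟨z, hz0, ?_⟩
  haveI : Invertible z := invertibleOfNonzero hz0
  have key : q.reverse.eval (⅟ z) * z ^ m = q.eval z :=
    Polynomial.eval₂_reverse_mul_pow (RingHom.id ℂ) z q
  haveI : Invertible (1/z) := invertibleOfNonzero (by simp [hz0])
  have key2 : q.reverse.eval (⅟ (1/z)) * (1/z) ^ m = q.eval (1/z) :=
    Polynomial.eval₂_reverse_mul_pow (RingHom.id ℂ) (1/z) q
  have hinv : (⅟ (1/z) : ℂ) = z := by
    rw [invOf_eq_inv]
    field_simp
  rw [hinv] at key2
  have hzm : z ^ m ≠ 0 := pow_ne_zero _ hz0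
  have hev : (p.eval z - w) * z ^ m + q.reverse.eval z = 0 := by
    simpa [hf, Polynomial.eval_add, Polynomial.eval_mul, Polynomial.eval_pow] using hzroot
  have hrev2 : q.reverse.eval z = q.eval (1/z) * z ^ m := by
    rw [← key2]
    field_simp
    rw [mul_assoc, ← mul_pow, one_div_mul_cancel hz0, one_pow, mul_one]
  rw [hrev2] at hev
  have hfin : (p.eval z + q.eval (1/z) - w) * z ^ m = 0 := by linear_combination hev
  have := (mul_eq_zero.mp hfin).resolve_right hzm
  linear_combination this
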